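/- Let ω > 0 and Q > 0. Suppose (λ_n) is a sequence in (0,1) with log(1/λ_n)/log n → 1 and n λ_n (log n)^{−1/2} → 0 as n → ∞. Then lim_{n→∞} n (log n)^{−1/2} · sup_{θ ∈ H_ω^∞(Q)} R_n(λ_n, θ) = 2√2 / ω, and moreover lim_{n→∞} n (log n)^{−1/2} · inf_{λ > 0} sup_{θ ∈ H_ω^∞(Q)} R_n(λ, θ) = 2√2 / ω. That is, the periodic Gaussian regularization with such λ_n is asymptotically minimax over H_ω^∞(Q). -/

import Mathlib

open Real Filter

/-- The ellipsoid `{θ : ∑ ρ_l θ_l² ≤ Q}` of square sequences. -/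
def ellipsoid (ρ : ℕ → ℝ) (Q : ℝ) : Set (ℕ → ℝ) :=
  {θ | Summable (fun l => ρ l * θ l ^ 2) ∧ ∑' l : ℕ, ρ l * θ l ^ 2 ≤ Q}

/-- The risk `R_n(λ, θ)` of the periodic Gaussian regularization estimator
`θ̂_l = (1 + λ β_l)⁻¹ y_l` in the Gaussian sequence model with noise variance `1/n`:
variance term plus squared-bias term. -/
noncomputable def regRisk (β : ℕ → ℝ) (n : ℕ) (lam : ℝ) (θ : ℕ → ℝ) : ℝ :=
  (1 / n) * ∑' l : ℕ, ((1 + lam * β l) ^ 2)⁻¹ +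
    ∑' l : ℕ, (lam * β l / (1 + lam * β l)) ^ 2 * θ l ^ 2

set_option linter.unusedVariables false
set_option linter.unusedSectionVars false

namespace APG


/-- exponent index: `β m = exp((kk m)^2 ω²/2)` -/
def kk (m : ℕ) : ℕ := (m+1)/2

variable {ω : ℝ} {β : ℕ → ℝ}

lemma beta_formula (hβ0 : β 0 = 1)
    (hβodd : ∀ l : ℕ, 1 ≤ l → β (2 * l - 1) = Real.exp ((l : ℝ) ^ 2 * ω ^ 2 / 2))
    (hβeven : ∀ l : ℕ, 1 ≤ l → β (2 * l) = Real.exp ((l : ℝ) ^ 2 * ω ^ 2 / 2)) :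
    ∀ m, β m = Real.exp ((kk m : ℝ) ^ 2 * ω ^ 2 / 2) := by
  intro m
  match m with
  | 0 => simp [kk, hβ0]
  | (mm+1) =>
    rcases Nat.even_or_odd (mm+1) with ⟨l, hl⟩ | ⟨l, hl⟩
    · have hl1 : 1 ≤ l := by omega
      have h2 : mm + 1 = 2 * l := by omega
      rw [h2, hβeven l hl1, show kk (2*l) = l by simp only [kk]; omega]
    · have h2 : mm + 1 = 2 * (l+1) - 1 := by omega
      rw [h2, hβodd (l+1) (by omega),
        show kk (2*(l+1)-1) = l + 1 by simp only [kk]; omega]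

section beta
variable (hβ : ∀ m, β m = Real.exp ((kk m : ℝ) ^ 2 * ω ^ 2 / 2))
include hβ

lemma beta_pos (m : ℕ) : 0 < β m := by rw [hβ]; exact Real.exp_pos _

lemma one_le_beta (m : ℕ) : 1 ≤ β m := by
  rw [hβ]; exact Real.one_le_exp (by positivity)

lemma beta_ge (m : ℕ) : Real.exp ((m : ℝ) * ω ^ 2 / 4) ≤ β m := by
  rw [hβ]
  apply Real.exp_le_exp.2
  have h1 : (m : ℝ) ≤ 2 * (kk m : ℕ) := by
    have : m ≤ 2 * kk m := by simp only [kk]; omega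
    exact_mod_cast this
  have h2 : (kk m : ℝ) ≤ (kk m : ℝ) ^ 2 := by
    have : kk m ≤ kk m ^ 2 := Nat.le_self_pow (by norm_num) _
    exact_mod_cast this
  nlinarith [sq_nonneg ω]

lemma summable_var (hω : 0 < ω) {lam : ℝ} (hl : 0 < lam) :
    Summable (fun m : ℕ => ((1 + lam * β m) ^ 2)⁻¹) := by
  have key : ∀ m : ℕ, ((1 + lam * β m) ^ 2)⁻¹ ≤ (lam^2)⁻¹ * Real.exp (-(ω^2/2)) ^ m := by
    intro m
    have hb := beta_ge hβ m
    have he : (0:ℝ) < Real.exp ((m:ℝ)*ω^2/4) := Real.exp_pos _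
    have h2 : (lam * Real.exp ((m:ℝ)*ω^2/4))^2 ≤ (1+lam*β m)^2 := by
      apply pow_le_pow_left₀ (by positivity)
      nlinarith [mul_le_mul_of_nonneg_left hb hl.le]
    calc ((1+lam*β m)^2)⁻¹ ≤ ((lam * Real.exp ((m:ℝ)*ω^2/4))^2)⁻¹ :=
          inv_anti₀ (by positivity) h2
      _ = (lam^2)⁻¹ * Real.exp (-(ω^2/2)) ^ m := by
          rw [mul_pow, mul_inv, ← Real.exp_nat_mul, ← Real.exp_neg, ← Real.exp_nat_mul]
          congr 2
          push_cast
          ring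
  have hr0 : (0:ℝ) ≤ Real.exp (-(ω^2/2)) := (Real.exp_pos _).le
  have hr1 : Real.exp (-(ω^2/2)) < 1 := Real.exp_lt_one_iff.2 (neg_lt_zero.2 (by positivity))
  exact Summable.of_nonneg_of_le (fun m => by positivity) key
    ((summable_geometric_of_lt_one hr0 hr1).mul_left _)

end beta

section beta2
variable (hβ : ∀ m, β m = Real.exp ((kk m : ℝ) ^ 2 * ω ^ 2 / 2))
  (hsum : ∀ lam : ℝ, 0 < lam → Summable (fun m : ℕ => ((1 + lam * β m) ^ 2)⁻¹))
include hβ hsum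

lemma S_lower (hω : 0 < ω) {lam A : ℝ} (hl : 0 < lam) (hA : 0 ≤ A) (K : ℕ)
    (hK : (K:ℝ)^2 * ω^2 / 2 ≤ -Real.log lam - A) :
    2*(K:ℝ) * ((1 + Real.exp (-A))^2)⁻¹ ≤ ∑' m : ℕ, ((1+lam*β m)^2)⁻¹ := by
  have hterm : ∀ m ∈ Finset.Icc 1 (2*K), ((1+Real.exp (-A))^2)⁻¹ ≤ ((1+lam*β m)^2)⁻¹ := by
    intro m hm
    rw [Finset.mem_Icc] at hm
    have hk : kk m ≤ K := by simp only [kk]; omega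
    have hbm : 0 < β m := by rw [hβ]; positivity
    have hlb : lam * β m ≤ Real.exp (-A) := by
      rw [hβ m, ← Real.exp_log hl, ← Real.exp_add]
      apply Real.exp_le_exp.2
      have hkk : ((kk m:ℝ))^2 ≤ (K:ℝ)^2 :=
        pow_le_pow_left₀ (by positivity) (Nat.cast_le.2 hk) 2
      nlinarith [sq_nonneg ω]
    apply inv_anti₀ (by positivity)
    have h0 : 0 ≤ lam * β m := by positivity
    nlinarith
  calc 2*(K:ℝ) * ((1 + Real.exp (-A))^2)⁻¹
      = ∑ _m ∈ Finset.Icc 1 (2*K), ((1 + Real.exp (-A))^2)⁻¹ := by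
        rw [Finset.sum_const, Nat.card_Icc, show 2*K+1-1 = 2*K from by omega,
          nsmul_eq_mul]
        push_cast; ring
    _ ≤ ∑ m ∈ Finset.Icc 1 (2*K), ((1+lam*β m)^2)⁻¹ := Finset.sum_le_sum hterm
    _ ≤ ∑' m : ℕ, ((1+lam*β m)^2)⁻¹ :=
        Summable.sum_le_tsum _ (fun m _ => by positivity) (hsum lam hl)

lemma S_upper (hω : 0 < ω) {lam A : ℝ} (hl : 0 < lam) (hA : 0 ≤ A) (K : ℕ)
    (hK : 2*(-Real.log lam + A) ≤ ((K:ℝ)+1)^2 * ω^2) :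
    ∑' m : ℕ, ((1+lam*β m)^2)⁻¹ ≤
      (2*(K:ℝ)+1) + Real.exp (-(2*A)) * (Real.exp (ω^2/2) * (1 - Real.exp (-(ω^2/2)))⁻¹) := by
  have hbpos : ∀ m, 0 < β m := fun m => by rw [hβ]; positivity
  rw [← Summable.sum_add_tsum_nat_add (f := fun m : ℕ => ((1+lam*β m)^2)⁻¹) (2*K+1) (hsum lam hl)]
  have h1 : ∑ m ∈ Finset.range (2*K+1), ((1+lam*β m)^2)⁻¹ ≤ (2*(K:ℝ)+1) := by
    calc ∑ m ∈ Finset.range (2*K+1), ((1+lam*β m)^2)⁻¹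
        ≤ ∑ _m ∈ Finset.range (2*K+1), (1:ℝ) := by
          apply Finset.sum_le_sum
          intro m _
          have := hbpos m
          have h0 : 0 ≤ lam * β m := by positivity
          rw [inv_le_one_iff₀]
          right; nlinarith
      _ = (2*(K:ℝ)+1) := by
          rw [Finset.sum_const, Finset.card_range, nsmul_eq_mul, mul_one]
          push_cast; ring
  have hr0 : (0:ℝ) ≤ Real.exp (-(ω^2/2)) := (Real.exp_pos _).le
  have hr1 : Real.exp (-(ω^2/2)) < 1 := Real.exp_lt_one_iff.2 (neg_lt_zero.2 (by positivity))
  have hgeo : Summable (fun j : ℕ => Real.exp (-(2*A)) * Real.exp (ω^2/2) * Real.exp (-(ω^2/2)) ^ j) :=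
    (summable_geometric_of_lt_one hr0 hr1).mul_left _
  have hptw : ∀ j : ℕ, ((1+lam*β (j + (2*K+1)))^2)⁻¹ ≤
      Real.exp (-(2*A)) * Real.exp (ω^2/2) * Real.exp (-(ω^2/2)) ^ j := by
    intro j
    have hc1 : K + 1 ≤ kk (j + (2*K+1)) := by simp only [kk]; omega
    have hc2 : j + 2*K + 1 ≤ 2 * kk (j + (2*K+1)) := by simp only [kk]; omega
    have hc1' : (K:ℝ) + 1 ≤ (kk (j + (2*K+1)) : ℝ) := by exact_mod_cast hc1
    have hc2' : (j:ℝ) + 2*(K:ℝ) + 1 ≤ 2*(kk (j + (2*K+1)) : ℝ) := by exact_mod_cast hc2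
    set c : ℝ := (kk (j + (2*K+1)) : ℝ)
    have hbm : β (j + (2*K+1)) = Real.exp (c^2 * ω^2/2) := hβ _
    have hlbm : lam * β (j + (2*K+1)) = Real.exp (Real.log lam + c^2*ω^2/2) := by
      rw [hbm, Real.exp_add, Real.exp_log hl]
    have hep : (0:ℝ) < Real.exp (Real.log lam + c^2*ω^2/2) := Real.exp_pos _
    have hstep : ((1+lam*β (j + (2*K+1)))^2)⁻¹ ≤
        Real.exp (-(2*(Real.log lam + c^2*ω^2/2))) := by
      calc ((1+lam*β (j + (2*K+1)))^2)⁻¹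
          ≤ ((lam*β (j + (2*K+1)))^2)⁻¹ := by
            apply inv_anti₀ (by rw [hlbm]; positivity)
            have h0 : 0 < lam * β (j + (2*K+1)) := by rw [hlbm]; exact hep
            nlinarith
        _ = Real.exp (-(2*(Real.log lam + c^2*ω^2/2))) := by
            rw [hlbm, ← Real.exp_nat_mul, ← Real.exp_neg]
            norm_num
    refine hstep.trans ?_
    rw [← Real.exp_nat_mul, ← Real.exp_add, ← Real.exp_add]
    apply Real.exp_le_exp.2
    have hsq : ((K:ℝ)+1)^2 + (c - ((K:ℝ)+1)) ≤ c^2 := by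
      nlinarith [mul_nonneg (sub_nonneg.2 hc1') (show (0:ℝ) ≤ c + (K:ℝ) by positivity)]
    have hfin2 : ((K:ℝ)+1)^2*ω^2 + (((j:ℝ)-1)/2)*ω^2 ≤ c^2*ω^2 := by
      nlinarith [sq_nonneg ω]
    linarith
  have htail : ∑' j : ℕ, ((1+lam*β (j + (2*K+1)))^2)⁻¹ ≤
      Real.exp (-(2*A)) * (Real.exp (ω^2/2) * (1 - Real.exp (-(ω^2/2)))⁻¹) := by
    have hsum2 : Summable (fun j : ℕ => ((1+lam*β (j + (2*K+1)))^2)⁻¹) :=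
      (summable_nat_add_iff (f := fun m : ℕ => ((1+lam*β m)^2)⁻¹) (2*K+1)).2 (hsum lam hl)
    have h3 := hsum2.tsum_le_tsum hptw hgeo
    have h4 : ∑' j : ℕ, Real.exp (-(2*A)) * Real.exp (ω^2/2) * Real.exp (-(ω^2/2)) ^ j
        = Real.exp (-(2*A)) * (Real.exp (ω^2/2) * (1 - Real.exp (-(ω^2/2)))⁻¹) := by
      simp only [mul_assoc]
      rw [tsum_mul_left, tsum_mul_left, tsum_geometric_of_lt_one hr0 hr1]
    linarith [h3, h4.le, h4.ge]
  linarith [h1, htail]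

end beta2

variable {Q lam : ℝ} {n : ℕ}

lemma zero_mem (hQ : 0 ≤ Q) : (0 : ℕ → ℝ) ∈ ellipsoid β Q := by
  constructor
  · simpa using summable_zero
  · simpa using hQ

lemma risk_zero : regRisk β n lam 0 = (1/n) * ∑' m : ℕ, ((1+lam*β m)^2)⁻¹ := by
  simp [regRisk]

section pos
variable (hbpos : ∀ m, 0 < β m)
include hbpos

lemma bias_le (hQ : 0 ≤ Q) (hl : 0 < lam) {θ : ℕ → ℝ} (hθ : θ ∈ ellipsoid β Q) :
    ∑' l : ℕ, (lam * β l / (1 + lam * β l)) ^ 2 * θ l ^ 2 ≤ lam/4 * Q := by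
  have hpt : ∀ l, (lam*β l/(1+lam*β l))^2*θ l^2 ≤ lam/4 * (β l * θ l^2) := by
    intro l
    have hb := hbpos l
    have key : (lam*β l/(1+lam*β l))^2 ≤ lam * β l/4 := by
      rw [div_pow, div_le_div_iff₀ (by positivity) (by norm_num)]
      nlinarith [sq_nonneg (1 - lam*β l), mul_pos hl hb]
    calc (lam*β l/(1+lam*β l))^2*θ l^2 ≤ (lam * β l/4) * θ l^2 :=
          mul_le_mul_of_nonneg_right key (sq_nonneg _)
      _ = lam/4 * (β l * θ l^2) := by ring
  have hs2 : Summable (fun l => lam/4 * (β l * θ l^2)) := hθ.1.mul_left _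
  have hs1 : Summable (fun l => (lam*β l/(1+lam*β l))^2*θ l^2) :=
    Summable.of_nonneg_of_le (fun l => by positivity) hpt hs2
  calc ∑' l : ℕ, (lam * β l / (1 + lam * β l)) ^ 2 * θ l ^ 2
      ≤ ∑' l : ℕ, lam/4 * (β l * θ l^2) := hs1.tsum_le_tsum hpt hs2
    _ = lam/4 * ∑' l : ℕ, β l * θ l^2 := tsum_mul_left
    _ ≤ lam/4 * Q := mul_le_mul_of_nonneg_left hθ.2 (by positivity)

lemma risk_le (hQ : 0 ≤ Q) (hl : 0 < lam) {θ : ℕ → ℝ} (hθ : θ ∈ ellipsoid β Q) :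
    regRisk β n lam θ ≤ (1/n) * (∑' m : ℕ, ((1+lam*β m)^2)⁻¹) + lam/4 * Q := by
  have := bias_le hbpos hQ hl hθ
  rw [regRisk]
  linarith

lemma spike_mem (hQ : 0 ≤ Q) (m : ℕ) :
    (fun i => if i = m then Real.sqrt (Q / β m) else 0) ∈ ellipsoid β Q := by
  have hb := hbpos m
  have hfun : (fun l => β l * (if l = m then Real.sqrt (Q / β m) else 0) ^ 2)
      = (fun l => if l = m then Q else 0) := by
    funext l
    by_cases hl : l = m
    · subst hl
      rw [if_pos rfl, if_pos rfl, Real.sq_sqrt (div_nonneg hQ hb.le),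
        mul_div_cancel₀ _ (ne_of_gt hb)]
    · simp [hl]
  constructor
  · rw [hfun]
    exact summable_of_ne_finset_zero (s := {m}) (fun l hl => if_neg (by simpa using hl))
  · rw [hfun, tsum_ite_eq]

lemma spike_risk (hQ : 0 ≤ Q) (hl : 0 < lam) (m : ℕ) :
    regRisk β n lam (fun i => if i = m then Real.sqrt (Q / β m) else 0)
      = (1/n) * (∑' m : ℕ, ((1+lam*β m)^2)⁻¹)
        + (lam * β m / (1 + lam * β m)) ^ 2 * (Q / β m) := by
  have hb := hbpos m
  rw [regRisk]
  congr 1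
  have hfun : (fun l => (lam * β l / (1 + lam * β l)) ^ 2 *
      (if l = m then Real.sqrt (Q / β m) else 0) ^ 2)
      = (fun l => if l = m then (lam * β m / (1 + lam * β m)) ^ 2 * (Q / β m) else 0) := by
    funext l
    by_cases hl : l = m
    · subst hl
      rw [if_pos rfl, if_pos rfl, Real.sq_sqrt (div_nonneg hQ hb.le)]
    · simp [hl]
  rw [hfun, tsum_ite_eq]

lemma risk_nonneg (θ : ℕ → ℝ) : 0 ≤ regRisk β n lam θ := by
  rw [regRisk]
  have h1 : 0 ≤ ∑' l : ℕ, ((1 + lam * β l) ^ 2)⁻¹ := tsum_nonneg (fun l => by positivity)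
  have h2 : 0 ≤ ∑' l : ℕ, (lam * β l / (1 + lam * β l)) ^ 2 * θ l ^ 2 :=
    tsum_nonneg (fun l => by positivity)
  have : (0:ℝ) ≤ (n:ℝ) := Nat.cast_nonneg n
  positivity

lemma sup_le_M (hQ : 0 ≤ Q) (hl : 0 < lam) :
    (⨆ θ ∈ ellipsoid β Q, regRisk β n lam θ) ≤
      (1/n) * (∑' m : ℕ, ((1+lam*β m)^2)⁻¹) + lam/4 * Q := by
  have hM0 : 0 ≤ (1/n) * (∑' m : ℕ, ((1+lam*β m)^2)⁻¹) + lam/4 * Q := by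
    have h1 : 0 ≤ ∑' m : ℕ, ((1+lam*β m)^2)⁻¹ := tsum_nonneg (fun l => by positivity)
    have : (0:ℝ) ≤ (n:ℝ) := Nat.cast_nonneg n
    positivity
  apply ciSup_le
  intro θ
  by_cases hθ : θ ∈ ellipsoid β Q
  · rw [ciSup_pos hθ]; exact risk_le hbpos hQ hl hθ
  · haveI : IsEmpty (θ ∈ ellipsoid β Q) := ⟨hθ⟩
    rw [Real.iSup_of_isEmpty]
    exact hM0

lemma le_sup (hQ : 0 ≤ Q) (hl : 0 < lam) {θ₀ : ℕ → ℝ} (hθ₀ : θ₀ ∈ ellipsoid β Q) :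
    regRisk β n lam θ₀ ≤ ⨆ θ ∈ ellipsoid β Q, regRisk β n lam θ := by
  have hM0 : 0 ≤ (1/n) * (∑' m : ℕ, ((1+lam*β m)^2)⁻¹) + lam/4 * Q := by
    have h1 : 0 ≤ ∑' m : ℕ, ((1+lam*β m)^2)⁻¹ := tsum_nonneg (fun l => by positivity)
    have : (0:ℝ) ≤ (n:ℝ) := Nat.cast_nonneg n
    positivity
  have hbdd : BddAbove (Set.range (fun θ => ⨆ _ : θ ∈ ellipsoid β Q, regRisk β n lam θ)) := by
    refine ⟨(1/n) * (∑' m : ℕ, ((1+lam*β m)^2)⁻¹) + lam/4 * Q, ?_⟩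
    rintro x ⟨θ, rfl⟩
    dsimp only
    by_cases hθ : θ ∈ ellipsoid β Q
    · rw [ciSup_pos hθ]; exact risk_le hbpos hQ hl hθ
    · haveI : IsEmpty (θ ∈ ellipsoid β Q) := ⟨hθ⟩
      rw [Real.iSup_of_isEmpty]
      exact hM0
  have := le_ciSup hbdd θ₀
  rwa [ciSup_pos hθ₀] at this

end pos


lemma tendsto_sqrt_atTop : Tendsto Real.sqrt atTop atTop := by
  apply tendsto_atTop_atTop_of_monotone (fun x y h => Real.sqrt_le_sqrt h)
  intro b
  exact ⟨(max b 0)^2, by rw [Real.sqrt_sq (le_max_right b 0)]; exact le_max_left b 0⟩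

lemma tendsto_log_nat : Tendsto (fun n : ℕ => Real.log n) atTop atTop :=
  Real.tendsto_log_atTop.comp tendsto_natCast_atTop_atTop

lemma sqrt_log_pos : ∀ᶠ n : ℕ in atTop, 0 < Real.sqrt (Real.log n) := by
  filter_upwards [tendsto_log_nat.eventually_gt_atTop 0] with n hn
  exact Real.sqrt_pos.2 hn

lemma const_div_sqrt_log (c : ℝ) :
    Tendsto (fun n : ℕ => c / Real.sqrt (Real.log n)) atTop (nhds 0) :=
  Tendsto.div_atTop tendsto_const_nhds (tendsto_sqrt_atTop.comp tendsto_log_nat)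

lemma sqrt_ratio (a : ℕ → ℝ) (r : ℝ) (hr : 0 < r)
    (h : Tendsto (fun n => a n / Real.log n) atTop (nhds r)) :
    Tendsto (fun n => Real.sqrt (2 * a n) / Real.sqrt (Real.log n)) atTop
      (nhds (Real.sqrt (2*r))) := by
  have h2 : Tendsto (fun n => 2 * a n / Real.log n) atTop (nhds (2*r)) := by
    have := h.const_mul 2
    simpa [mul_div_assoc] using this
  have h3 : Tendsto (fun n => Real.sqrt (2 * a n / Real.log n)) atTop
      (nhds (Real.sqrt (2*r))) := (Real.continuous_sqrt.tendsto _).comp h2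
  apply h3.congr'
  filter_upwards [tendsto_log_nat.eventually_gt_atTop 0] with n hn
  rw [Real.sqrt_div' _ (by positivity)]

lemma floor_div_sqrt_log (ω : ℝ) (hω : 0 < ω) (a : ℕ → ℝ) (r : ℝ) (hr : 0 < r)
    (h : Tendsto (fun n => a n / Real.log n) atTop (nhds r)) :
    Tendsto (fun n => ((⌊Real.sqrt (2 * a n) / ω⌋₊ : ℝ)) / Real.sqrt (Real.log n)) atTop
      (nhds (Real.sqrt (2*r) / ω)) := by
  have hs := sqrt_ratio a r hr h
  have hup : Tendsto (fun n => (Real.sqrt (2 * a n) / ω) / Real.sqrt (Real.log n)) atTop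
      (nhds (Real.sqrt (2*r) / ω)) := by
    have := hs.div_const ω
    apply this.congr
    intro n; ring
  have hlo : Tendsto (fun n => (Real.sqrt (2 * a n) / ω) / Real.sqrt (Real.log n)
      - 1 / Real.sqrt (Real.log n)) atTop (nhds (Real.sqrt (2*r) / ω)) := by
    have := hup.sub (const_div_sqrt_log 1)
    simpa using this
  apply tendsto_of_tendsto_of_tendsto_of_le_of_le' hlo hup
  · filter_upwards [sqrt_log_pos] with n hn
    have h1 : Real.sqrt (2 * a n) / ω - 1 ≤ (⌊Real.sqrt (2 * a n) / ω⌋₊ : ℝ) := by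
      have := Nat.lt_succ_floor (Real.sqrt (2 * a n) / ω)
      push_cast at this
      linarith
    rw [div_sub_div_same]
    gcongr
  · filter_upwards [sqrt_log_pos] with n hn
    gcongr
    exact Nat.floor_le (by positivity)

lemma tendsto_growth (a b : ℝ) (ha : 0 < a) :
    Tendsto (fun x : ℝ => a*x - b*Real.sqrt x) atTop atTop := by
  have h0 : Tendsto (fun x : ℝ => a * Real.sqrt x - b) atTop atTop := by
    apply tendsto_atTop_add_const_right
    exact (tendsto_sqrt_atTop.const_mul_atTop ha)
  have h1 : Tendsto (fun x : ℝ => Real.sqrt x * (a * Real.sqrt x - b)) atTop atTop :=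
    Tendsto.atTop_mul_atTop₀ tendsto_sqrt_atTop h0
  apply h1.congr'
  filter_upwards [eventually_ge_atTop (0:ℝ)] with x hx
  rw [mul_sub, show Real.sqrt x * (a * Real.sqrt x) = a * (Real.sqrt x * Real.sqrt x) by ring,
    Real.mul_self_sqrt hx]
  ring


lemma floor_sq_le {x ω : ℝ} (hω : 0 < ω) (hx : 0 ≤ x) :
    ((⌊Real.sqrt (2*x)/ω⌋₊ : ℝ))^2 * ω^2 / 2 ≤ x := by
  have h1 : (⌊Real.sqrt (2*x)/ω⌋₊:ℝ) ≤ Real.sqrt (2*x)/ω := Nat.floor_le (by positivity)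
  have h3 : ((⌊Real.sqrt (2*x)/ω⌋₊:ℝ))^2 ≤ (Real.sqrt (2*x)/ω)^2 :=
    pow_le_pow_left₀ (by positivity) h1 2
  have h2 : (Real.sqrt (2*x)/ω)^2 = 2*x/ω^2 := by
    rw [div_pow, Real.sq_sqrt (by linarith)]
  rw [h2] at h3
  have hω2 : (0:ℝ) < ω^2 := by positivity
  calc ((⌊Real.sqrt (2*x)/ω⌋₊:ℝ))^2 * ω^2/2 ≤ (2*x/ω^2) * ω^2/2 := by
        apply div_le_div_of_nonneg_right ?_ (by norm_num)
        exact mul_le_mul_of_nonneg_right h3 hω2.le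
    _ = x := by field_simp
lemma succ_floor_bound {x ω : ℝ} (hω : 0 < ω) (hx : 0 ≤ x) :
    2 * x ≤ ((⌊Real.sqrt (2*x)/ω⌋₊ : ℝ) + 1)^2 * ω^2 := by
  have h := (Nat.lt_succ_floor (Real.sqrt (2*x)/ω)).le
  push_cast at h
  have h2 : Real.sqrt (2*x) ≤ ((⌊Real.sqrt (2*x)/ω⌋₊:ℝ)+1) * ω := by
    rw [div_le_iff₀ hω] at h
    linarith
  have h3 := pow_le_pow_left₀ (Real.sqrt_nonneg _) h2 2
  rw [Real.sq_sqrt (by linarith), mul_pow] at h3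
  exact h3

lemma ceil_sq_ge {x ω : ℝ} (hω : 0 < ω) (hx : 0 ≤ x) :
    x ≤ ((⌈Real.sqrt (2*x)/ω⌉₊ : ℝ))^2 * ω^2 / 2 := by
  have h1 : Real.sqrt (2*x)/ω ≤ (⌈Real.sqrt (2*x)/ω⌉₊:ℝ) := Nat.le_ceil _
  have h2 : Real.sqrt (2*x) ≤ (⌈Real.sqrt (2*x)/ω⌉₊:ℝ) * ω := by
    rw [div_le_iff₀ hω] at h1; linarith
  have h3 := pow_le_pow_left₀ (Real.sqrt_nonneg _) h2 2
  rw [Real.sq_sqrt (by linarith), mul_pow] at h3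
  linarith

lemma ceil_sq_le {x ω : ℝ} (hω : 0 < ω) (hx : 0 ≤ x) :
    ((⌈Real.sqrt (2*x)/ω⌉₊ : ℝ))^2 * ω^2 / 2 ≤ x + ω * Real.sqrt (2*x) + ω^2/2 := by
  have h1 : (⌈Real.sqrt (2*x)/ω⌉₊:ℝ) < Real.sqrt (2*x)/ω + 1 :=
    Nat.ceil_lt_add_one (by positivity)
  have h2 : (⌈Real.sqrt (2*x)/ω⌉₊:ℝ) * ω ≤ Real.sqrt (2*x) + ω := by
    have := mul_le_mul_of_nonneg_right h1.le hω.le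
    calc (⌈Real.sqrt (2*x)/ω⌉₊:ℝ) * ω ≤ (Real.sqrt (2*x)/ω + 1) * ω := this
      _ = Real.sqrt (2*x) + ω := by field_simp
  have h3 := pow_le_pow_left₀ (by positivity) h2 2
  rw [mul_pow] at h3
  have h4 : (Real.sqrt (2*x) + ω)^2 = 2*x + 2*ω*Real.sqrt (2*x) + ω^2 := by
    have := Real.sq_sqrt (show (0:ℝ) ≤ 2*x by linarith)
    nlinarith [this]
  rw [h4] at h3
  linarith

lemma exists_A (c ε : ℝ) (hc : 0 < c) (hε : 0 < ε) :
    ∃ A : ℝ, 0 ≤ A ∧ c - ε ≤ c * ((1 + Real.exp (-A))^2)⁻¹ := by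
  refine ⟨max 0 (-Real.log (ε/(2*c))), le_max_left _ _, ?_⟩
  set x := Real.exp (-(max 0 (-Real.log (ε/(2*c))))) with hxdef
  have hx0 : 0 < x := Real.exp_pos _
  have hx1 : x ≤ ε/(2*c) := by
    rw [hxdef]
    calc Real.exp (-(max 0 (-Real.log (ε/(2*c)))))
        ≤ Real.exp (Real.log (ε/(2*c))) := by
          apply Real.exp_le_exp.2
          have := le_max_right (0:ℝ) (-Real.log (ε/(2*c)))
          linarith
      _ = ε/(2*c) := Real.exp_log (by positivity)
  have key : 1 - 2*x ≤ ((1+x)^2)⁻¹ := by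
    rcases le_or_gt (1 - 2*x) 0 with h|h
    · exact h.trans (by positivity)
    · rw [← one_div, le_div_iff₀ (by positivity)]
      nlinarith [sq_nonneg x]
  have h2x : 2*c*x ≤ ε := by
    have := mul_le_mul_of_nonneg_left hx1 (show (0:ℝ) ≤ 2*c by linarith)
    calc 2*c*x ≤ 2*c*(ε/(2*c)) := this
      _ = ε := by field_simp
  calc c - ε ≤ c * (1 - 2*x) := by nlinarith
    _ ≤ c * ((1+x)^2)⁻¹ := mul_le_mul_of_nonneg_left key hc.le


lemma case2_top {ω Q δ : ℝ} (hω : 0 < ω) (hQ : 0 < Q) (hδ0 : 0 < δ) (hδ1 : δ ≤ 1/2) :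
    Tendsto (fun n : ℕ => (n:ℝ)/Real.sqrt (Real.log n) *
      (Q/(4 * Real.exp ((((⌈Real.sqrt (2*((1-δ/2)*Real.log n))/ω⌉₊:ℕ):ℝ))^2*ω^2/2))))
      atTop atTop := by
  have haux : Tendsto (fun n : ℕ => (Q/4) * Real.exp (-(ω^2/2)) *
      Real.exp ((δ/2)*Real.log n - (ω*Real.sqrt 2+1)*Real.sqrt (Real.log n))) atTop atTop := by
    apply Tendsto.const_mul_atTop (by positivity)
    exact Real.tendsto_exp_atTop.comp
      ((tendsto_growth (δ/2) (ω*Real.sqrt 2+1) (by positivity)).comp tendsto_log_nat)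
  apply tendsto_atTop_mono' atTop ?_ haux
  filter_upwards [tendsto_log_nat.eventually_ge_atTop 1, eventually_ge_atTop 1] with n hL hn1
  have hL0 : (0:ℝ) < Real.log n := by linarith
  have hsL : 0 < Real.sqrt (Real.log n) := Real.sqrt_pos.2 hL0
  have hn0 : (0:ℝ) < (n:ℝ) := by
    have : (1:ℝ) ≤ (n:ℝ) := by exact_mod_cast hn1
    linarith
  have hx0 : 0 ≤ (1-δ/2)*Real.log n := by nlinarith
  set K : ℕ := ⌈Real.sqrt (2*((1-δ/2)*Real.log n))/ω⌉₊ with hK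
  have hBle : Real.exp (((K:ℝ))^2*ω^2/2) ≤
      Real.exp ((1-δ/2)*Real.log n + ω*Real.sqrt 2*Real.sqrt (Real.log n) + ω^2/2) := by
    apply Real.exp_le_exp.2
    have h1 := ceil_sq_le (x := (1-δ/2)*Real.log n) hω hx0
    have h2 : Real.sqrt (2*((1-δ/2)*Real.log n)) ≤ Real.sqrt 2 * Real.sqrt (Real.log n) := by
      rw [← Real.sqrt_mul (by norm_num) (Real.log n)]
      apply Real.sqrt_le_sqrt
      nlinarith
    nlinarith [Real.sqrt_nonneg (2*((1-δ/2)*Real.log n))]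
  have hsle : Real.sqrt (Real.log n) ≤ Real.exp (Real.sqrt (Real.log n)) := by
    have := Real.add_one_le_exp (Real.sqrt (Real.log n))
    linarith
  have hBpos : (0:ℝ) < Real.exp (((K:ℝ))^2*ω^2/2) := Real.exp_pos _
  have hden : Real.sqrt (Real.log n) * Real.exp (((K:ℝ))^2*ω^2/2) ≤
      Real.exp (Real.sqrt (Real.log n) + ((1-δ/2)*Real.log n
        + ω*Real.sqrt 2*Real.sqrt (Real.log n) + ω^2/2)) := by
    rw [Real.exp_add]
    exact mul_le_mul hsle hBle hBpos.le (Real.exp_pos _).le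
  have hdenpos : 0 < Real.sqrt (Real.log n) * Real.exp (((K:ℝ))^2*ω^2/2) := by positivity
  have hdiv : Real.exp (Real.log n) / Real.exp (Real.sqrt (Real.log n) + ((1-δ/2)*Real.log n
        + ω*Real.sqrt 2*Real.sqrt (Real.log n) + ω^2/2))
      ≤ (n:ℝ) / (Real.sqrt (Real.log n) * Real.exp (((K:ℝ))^2*ω^2/2)) := by
    rw [Real.exp_log hn0]
    exact div_le_div_of_nonneg_left hn0.le hdenpos hden
  calc (Q/4) * Real.exp (-(ω^2/2)) *
        Real.exp ((δ/2)*Real.log n - (ω*Real.sqrt 2+1)*Real.sqrt (Real.log n))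
      = (Q/4) * (Real.exp (Real.log n) / Real.exp (Real.sqrt (Real.log n) + ((1-δ/2)*Real.log n
        + ω*Real.sqrt 2*Real.sqrt (Real.log n) + ω^2/2))) := by
        rw [← Real.exp_sub, mul_assoc, ← Real.exp_add]
        congr 2
        ring
    _ ≤ (Q/4) * ((n:ℝ) / (Real.sqrt (Real.log n) * Real.exp (((K:ℝ))^2*ω^2/2))) :=
        mul_le_mul_of_nonneg_left hdiv (by positivity)
    _ = (n:ℝ)/Real.sqrt (Real.log n) *
        (Q/(4 * Real.exp (((K:ℝ))^2*ω^2/2))) := by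
        field_simp


end APG

set_option maxHeartbeats 3200000

/-- **Theorem 2.** The periodic Gaussian regularization is asymptotically minimax over the
infinite-order Sobolev ellipsoid `H_ω^∞(Q)`, with asymptotic maximal risk
`2√2 ω⁻¹ n⁻¹ (log n)^{1/2}`, provided `log(1/λ_n) ∼ log n` and `λ_n = o(n⁻¹ (log n)^{1/2})`. -/
theorem stmt_1 (ω Q : ℝ) (hω : 0 < ω) (hQ : 0 < Q)
    (β : ℕ → ℝ) (hβ0 : β 0 = 1)
    (hβodd : ∀ l : ℕ, 1 ≤ l → β (2 * l - 1) = Real.exp ((l : ℝ) ^ 2 * ω ^ 2 / 2))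
    (hβeven : ∀ l : ℕ, 1 ≤ l → β (2 * l) = Real.exp ((l : ℝ) ^ 2 * ω ^ 2 / 2))
    (lam : ℕ → ℝ) (hlam : ∀ n : ℕ, lam n ∈ Set.Ioo (0 : ℝ) 1)
    (hlam1 : Tendsto (fun n : ℕ => Real.log (1 / lam n) / Real.log n) atTop (nhds 1))
    (hlam2 : Tendsto (fun n : ℕ => (n : ℝ) * lam n / Real.sqrt (Real.log n)) atTop (nhds 0)) :
    Tendsto (fun n : ℕ => (n : ℝ) / Real.sqrt (Real.log n) *
        ⨆ θ ∈ ellipsoid β Q, regRisk β n (lam n) θ)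
      atTop (nhds (2 * Real.sqrt 2 / ω)) ∧
    Tendsto (fun n : ℕ => (n : ℝ) / Real.sqrt (Real.log n) *
        sInf ((fun l : ℝ => ⨆ θ ∈ ellipsoid β Q, regRisk β n l θ) '' Set.Ioi 0))
      atTop (nhds (2 * Real.sqrt 2 / ω)) := by
  classical
  have hβ : ∀ m, β m = Real.exp ((APG.kk m : ℝ) ^ 2 * ω ^ 2 / 2) :=
    APG.beta_formula hβ0 hβodd hβeven
  have hbpos : ∀ m, 0 < β m := APG.beta_pos hβ
  have hsumv : ∀ l : ℝ, 0 < l → Summable (fun m : ℕ => ((1 + l * β m) ^ 2)⁻¹) :=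
    fun l hl => APG.summable_var hβ hω hl
  have hsqrt2 : 0 < Real.sqrt 2 := Real.sqrt_pos.2 (by norm_num)
  have ht0 : 0 < 2 * Real.sqrt 2 / ω := by positivity
  have hμpos : ∀ n, 0 < -Real.log (lam n) :=
    fun n => neg_pos.2 (Real.log_neg (hlam n).1 (hlam n).2)
  have hμ : Tendsto (fun n : ℕ => -Real.log (lam n) / Real.log n) atTop (nhds 1) := by
    apply hlam1.congr; intro n; rw [one_div, Real.log_inv]
  have hconst_div_log : ∀ c : ℝ, Tendsto (fun n : ℕ => c / Real.log n) atTop (nhds 0) :=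
    fun c => Tendsto.div_atTop tendsto_const_nhds APG.tendsto_log_nat
  have hZ : Tendsto (fun n : ℕ =>
      (∑' m : ℕ, ((1 + lam n * β m) ^ 2)⁻¹) / Real.sqrt (Real.log n)) atTop
      (nhds (2 * Real.sqrt 2 / ω)) := by
    set Cw : ℝ := Real.exp (ω^2/2) * (1 - Real.exp (-(ω^2/2)))⁻¹ with hCw
    -- upper comparison
    have hup_ev : ∀ᶠ n : ℕ in atTop,
        (∑' m : ℕ, ((1 + lam n * β m) ^ 2)⁻¹) / Real.sqrt (Real.log n) ≤
        (2*((⌊Real.sqrt (2*(-Real.log (lam n)))/ω⌋₊ : ℕ):ℝ) + 1 + Cw) / Real.sqrt (Real.log n) := by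
      filter_upwards [APG.sqrt_log_pos] with n hn
      have hKcond : 2*(-Real.log (lam n) + 0) ≤
          ((((⌊Real.sqrt (2*(-Real.log (lam n)))/ω⌋₊ : ℕ)):ℝ)+1)^2*ω^2 := by
        have := APG.succ_floor_bound (x := -Real.log (lam n)) hω (hμpos n).le
        linarith
      have hS := APG.S_upper hβ hsumv hω (hlam n).1 le_rfl _ hKcond
      rw [show (-(2*(0:ℝ))) = 0 by norm_num, Real.exp_zero, one_mul] at hS
      gcongr
    have hwlim : Tendsto (fun n : ℕ =>
        (2*((⌊Real.sqrt (2*(-Real.log (lam n)))/ω⌋₊ : ℕ):ℝ) + 1 + Cw) / Real.sqrt (Real.log n))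
        atTop (nhds (2 * Real.sqrt 2 / ω)) := by
      have hfl := APG.floor_div_sqrt_log ω hω (fun n : ℕ => -Real.log (lam n)) 1 one_pos hμ
      have h2 := (hfl.const_mul 2).add (APG.const_div_sqrt_log (1 + Cw))
      have h3 : 2 * (Real.sqrt (2*1) / ω) + 0 = 2 * Real.sqrt 2 / ω := by
        rw [show (2*1:ℝ) = 2 by norm_num]; ring
      rw [h3] at h2
      apply h2.congr
      intro n
      ring
    have hupε : ∀ ε : ℝ, 0 < ε → ∀ᶠ n : ℕ in atTop,
        (∑' m : ℕ, ((1 + lam n * β m) ^ 2)⁻¹) / Real.sqrt (Real.log n)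
          ≤ 2 * Real.sqrt 2 / ω + ε := by
      intro ε hε
      filter_upwards [hup_ev, hwlim.eventually_le_const (show 2 * Real.sqrt 2 / ω
        < 2 * Real.sqrt 2 / ω + ε by linarith)] with n h1 h2
      linarith
    have hloε : ∀ ε : ℝ, 0 < ε → ∀ᶠ n : ℕ in atTop,
        2 * Real.sqrt 2 / ω - ε ≤
        (∑' m : ℕ, ((1 + lam n * β m) ^ 2)⁻¹) / Real.sqrt (Real.log n) := by
      intro ε hε
      obtain ⟨A, hA0, hAL⟩ := APG.exists_A (2 * Real.sqrt 2 / ω) (ε/2) ht0 (by positivity)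
      have hratio : Tendsto (fun n : ℕ => (-Real.log (lam n) - A) / Real.log n) atTop
          (nhds 1) := by
        have := hμ.sub (hconst_div_log A)
        simpa [sub_div] using this
      have hfl2 := APG.floor_div_sqrt_log ω hω (fun n : ℕ => -Real.log (lam n) - A) 1
        one_pos hratio
      have hq : Tendsto (fun n : ℕ =>
          2*((⌊Real.sqrt (2*(-Real.log (lam n) - A))/ω⌋₊ : ℕ):ℝ) * ((1+Real.exp (-A))^2)⁻¹
            / Real.sqrt (Real.log n)) atTop
          (nhds (2 * (Real.sqrt (2*1) / ω) * ((1+Real.exp (-A))^2)⁻¹)) := by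
        have := (hfl2.const_mul 2).mul_const ((1+Real.exp (-A))^2)⁻¹
        apply this.congr
        intro n
        ring
      have hLq : 2 * Real.sqrt 2 / ω - ε/2 ≤
          2 * (Real.sqrt (2*1) / ω) * ((1+Real.exp (-A))^2)⁻¹ := by
        have h4 : 2 * (Real.sqrt (2*1) / ω) * ((1+Real.exp (-A))^2)⁻¹
            = (2 * Real.sqrt 2 / ω) * ((1+Real.exp (-A))^2)⁻¹ := by
          rw [show (2*1:ℝ) = 2 by norm_num]; ring
        rw [h4]
        exact hAL
      have hqev := hq.eventually_const_le (show 2 * Real.sqrt 2 / ω - ε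
        < 2 * (Real.sqrt (2*1) / ω) * ((1+Real.exp (-A))^2)⁻¹ by linarith)
      have hposev : ∀ᶠ n : ℕ in atTop, 0 ≤ -Real.log (lam n) - A := by
        filter_upwards [hratio.eventually_const_le (show (1:ℝ)/2 < 1 by norm_num),
          APG.tendsto_log_nat.eventually_gt_atTop 0] with n h1 h2
        have := mul_le_mul_of_nonneg_right h1 h2.le
        rw [div_mul_cancel₀ _ h2.ne'] at this
        nlinarith
      filter_upwards [hqev, hposev, APG.sqrt_log_pos] with n h1 h2 h3
      refine h1.trans ?_
      have hKcond : ((((⌊Real.sqrt (2*(-Real.log (lam n) - A))/ω⌋₊ : ℕ)):ℝ))^2*ω^2/2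
          ≤ -Real.log (lam n) - A := APG.floor_sq_le hω h2
      have hS := APG.S_lower hβ hsumv hω (hlam n).1 hA0 _ hKcond
      gcongr
    rw [Metric.tendsto_atTop]
    intro ε hε
    have hcomb := (hloε (ε/2) (by linarith)).and (hupε (ε/2) (by linarith))
    rcases eventually_atTop.1 hcomb with ⟨N, hN⟩
    refine ⟨N, fun n hn => ?_⟩
    have h := hN n hn
    rw [Real.dist_eq, abs_lt]
    constructor <;> linarith [h.1, h.2]
  have part1 : Tendsto (fun n : ℕ => (n : ℝ) / Real.sqrt (Real.log n) *
      ⨆ θ ∈ ellipsoid β Q, regRisk β n (lam n) θ) atTop (nhds (2 * Real.sqrt 2 / ω)) := by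
    have hup : ∀ᶠ n : ℕ in atTop, (n:ℝ)/Real.sqrt (Real.log n) *
        (⨆ θ ∈ ellipsoid β Q, regRisk β n (lam n) θ)
        ≤ (∑' m : ℕ, ((1 + lam n * β m) ^ 2)⁻¹)/Real.sqrt (Real.log n)
          + Q/4 * ((n:ℝ) * lam n / Real.sqrt (Real.log n)) := by
      filter_upwards [APG.sqrt_log_pos, eventually_ge_atTop 1] with n hn hn1
      have hn0 : (0:ℝ) < (n:ℝ) := by exact_mod_cast hn1
      have hsup := APG.sup_le_M (β := β) (n := n) hbpos hQ.le (hlam n).1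
      have hc0 : (0:ℝ) ≤ (n:ℝ)/Real.sqrt (Real.log n) := by positivity
      have hmul := mul_le_mul_of_nonneg_left hsup hc0
      refine hmul.trans (le_of_eq ?_)
      field_simp
    have hlo : ∀ᶠ n : ℕ in atTop,
        (∑' m : ℕ, ((1 + lam n * β m) ^ 2)⁻¹)/Real.sqrt (Real.log n)
        ≤ (n:ℝ)/Real.sqrt (Real.log n) *
          (⨆ θ ∈ ellipsoid β Q, regRisk β n (lam n) θ) := by
      filter_upwards [APG.sqrt_log_pos, eventually_ge_atTop 1] with n hn hn1
      have hn0 : (0:ℝ) < (n:ℝ) := by exact_mod_cast hn1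
      have hc0 : (0:ℝ) ≤ (n:ℝ)/Real.sqrt (Real.log n) := by positivity
      have h1 := APG.le_sup (n := n) hbpos hQ.le (hlam n).1 (APG.zero_mem (β := β) hQ.le)
      rw [APG.risk_zero] at h1
      have hmul := mul_le_mul_of_nonneg_left h1 hc0
      refine le_trans (le_of_eq ?_) hmul
      field_simp
    have hulim : Tendsto (fun n : ℕ =>
        (∑' m : ℕ, ((1 + lam n * β m) ^ 2)⁻¹)/Real.sqrt (Real.log n)
          + Q/4 * ((n:ℝ) * lam n / Real.sqrt (Real.log n))) atTop
        (nhds (2 * Real.sqrt 2 / ω)) := by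
      have := hZ.add (hlam2.const_mul (Q/4))
      simpa using this
    exact tendsto_of_tendsto_of_tendsto_of_le_of_le' hZ hulim hlo hup
  refine ⟨part1, ?_⟩
  have hunif : ∀ ε : ℝ, 0 < ε → ∀ᶠ n : ℕ in atTop, ∀ l : ℝ, 0 < l →
      2 * Real.sqrt 2 / ω - ε ≤ (n : ℝ) / Real.sqrt (Real.log n) *
        ⨆ θ ∈ ellipsoid β Q, regRisk β n l θ := by
    intro ε hε
    set δ : ℝ := min (1/2) (ε/4 * (ω/(2*Real.sqrt 2))) with hδdef
    have hδ0 : 0 < δ := lt_min (by norm_num) (by positivity)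
    have hδ1 : δ ≤ 1/2 := min_le_left _ _
    have hδt : (2*Real.sqrt 2/ω) * δ ≤ ε/4 := by
      have h1 : δ ≤ ε/4 * (ω/(2*Real.sqrt 2)) := min_le_right _ _
      have h2 := mul_le_mul_of_nonneg_left h1 ht0.le
      calc (2*Real.sqrt 2/ω) * δ ≤ (2*Real.sqrt 2/ω) * (ε/4 * (ω/(2*Real.sqrt 2))) := h2
        _ = ε/4 := by field_simp
    have hsq1 : (1 - δ) ≤ Real.sqrt (1 - δ) := by
      have h0 : (0:ℝ) ≤ 1 - δ := by linarith
      nlinarith [Real.sq_sqrt h0, Real.sqrt_nonneg (1-δ)]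
    have hc1 : 2*Real.sqrt 2/ω - ε/4 ≤ 2 * (Real.sqrt (2*(1-δ)) / ω) := by
      have h0 : (0:ℝ) ≤ 1 - δ := by linarith
      rw [Real.sqrt_mul (by norm_num) (1-δ)]
      have hm := mul_le_mul_of_nonneg_left hsq1 (show (0:ℝ) ≤ 2*Real.sqrt 2/ω by positivity)
      have heq : 2 * (Real.sqrt 2 * Real.sqrt (1-δ) / ω) = (2*Real.sqrt 2/ω) * Real.sqrt (1-δ) := by
        ring
      rw [heq]
      nlinarith
    obtain ⟨A, hA0, hAL⟩ := APG.exists_A (2 * (Real.sqrt (2*(1-δ)) / ω)) (ε/4)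
      (mul_pos two_pos (div_pos (Real.sqrt_pos.2 (by linarith)) hω)) (by positivity)
    have hr1 : Tendsto (fun n : ℕ => ((1-δ)*Real.log n)/Real.log n) atTop (nhds (1-δ)) := by
      apply tendsto_const_nhds.congr'
      filter_upwards [APG.tendsto_log_nat.eventually_gt_atTop 0] with n hn
      rw [mul_div_assoc, div_self hn.ne', mul_one]
    have hfl3 := APG.floor_div_sqrt_log ω hω (fun n : ℕ => (1-δ)*Real.log n) (1-δ)
      (by linarith) hr1
    have hq3 : Tendsto (fun n : ℕ =>
        2*((⌊Real.sqrt (2*((1-δ)*Real.log n))/ω⌋₊:ℕ):ℝ) * ((1+Real.exp (-A))^2)⁻¹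
          / Real.sqrt (Real.log n)) atTop
        (nhds (2 * (Real.sqrt (2*(1-δ)) / ω) * ((1+Real.exp (-A))^2)⁻¹)) := by
      have := (hfl3.const_mul 2).mul_const ((1+Real.exp (-A))^2)⁻¹
      apply this.congr
      intro n; ring
    have hq3ev : ∀ᶠ n : ℕ in atTop, 2*Real.sqrt 2/ω - (3/4)*ε ≤
        2*((⌊Real.sqrt (2*((1-δ)*Real.log n))/ω⌋₊:ℕ):ℝ) * ((1+Real.exp (-A))^2)⁻¹
          / Real.sqrt (Real.log n) :=
      hq3.eventually_const_le (by linarith)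
    have hr_ev : ∀ᶠ n : ℕ in atTop, 2*Real.sqrt 2/ω ≤ (n:ℝ)/Real.sqrt (Real.log n) *
        (Q/(4 * Real.exp ((((⌈Real.sqrt (2*((1-δ/2)*Real.log n))/ω⌉₊:ℕ):ℝ))^2*ω^2/2))) :=
      (APG.case2_top hω hQ hδ0 hδ1).eventually_ge_atTop _
    filter_upwards [hq3ev, hr_ev, APG.tendsto_log_nat.eventually_ge_atTop (max 1 (2*A/δ)),
      eventually_ge_atTop 1] with n hq hr hlog hn1
    have hL1 : (1:ℝ) ≤ Real.log n := le_trans (le_max_left _ _) hlog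
    have hL0 : (0:ℝ) < Real.log n := by linarith
    have hsL : 0 < Real.sqrt (Real.log n) := Real.sqrt_pos.2 hL0
    have hn0 : (0:ℝ) < (n:ℝ) := by exact_mod_cast hn1
    have hc0 : (0:ℝ) ≤ (n:ℝ)/Real.sqrt (Real.log n) := by positivity
    intro l hl
    by_cases hcase : (1-δ)*Real.log n + A ≤ -Real.log l
    · have h0 : 0 ≤ (1-δ)*Real.log n := by nlinarith
      have hKcond : ((((⌊Real.sqrt (2*((1-δ)*Real.log n))/ω⌋₊:ℕ)):ℝ))^2*ω^2/2
          ≤ -Real.log l - A := (APG.floor_sq_le hω h0).trans (by linarith)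
      have hS := APG.S_lower hβ hsumv hω hl hA0 _ hKcond
      have h1 := APG.le_sup (n := n) hbpos hQ.le hl (APG.zero_mem (β := β) hQ.le)
      rw [APG.risk_zero] at h1
      have hmul := mul_le_mul_of_nonneg_left h1 hc0
      have heq : (n:ℝ)/Real.sqrt (Real.log n) * (1/(n:ℝ) * ∑' m : ℕ, ((1 + l * β m) ^ 2)⁻¹)
          = (∑' m : ℕ, ((1 + l * β m) ^ 2)⁻¹)/Real.sqrt (Real.log n) := by
        field_simp
      calc 2*Real.sqrt 2/ω - ε ≤ 2*Real.sqrt 2/ω - (3/4)*ε := by linarith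
        _ ≤ 2*((⌊Real.sqrt (2*((1-δ)*Real.log n))/ω⌋₊:ℕ):ℝ) * ((1+Real.exp (-A))^2)⁻¹
            / Real.sqrt (Real.log n) := hq
        _ ≤ (∑' m : ℕ, ((1 + l * β m) ^ 2)⁻¹)/Real.sqrt (Real.log n) := by gcongr
        _ = (n:ℝ)/Real.sqrt (Real.log n)
            * (1/(n:ℝ) * ∑' m : ℕ, ((1 + l * β m) ^ 2)⁻¹) := heq.symm
        _ ≤ _ := hmul
    · push_neg at hcase
      set K2 : ℕ := ⌈Real.sqrt (2*((1-δ/2)*Real.log n))/ω⌉₊ with hK2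
      have hkkm : APG.kk (2*K2) = K2 := by simp only [APG.kk]; omega
      have hBm : β (2*K2) = Real.exp ((K2:ℝ)^2*ω^2/2) := by rw [hβ (2*K2), hkkm]
      have hx0 : 0 ≤ (1-δ/2)*Real.log n := by nlinarith
      have hB1 : Real.exp ((1-δ/2)*Real.log n) ≤ β (2*K2) := by
        rw [hBm]; exact Real.exp_le_exp.2 (APG.ceil_sq_ge hω hx0)
      have hb2 := hbpos (2*K2)
      have hlB : 1 ≤ l * β (2*K2) := by
        have hlexp : Real.exp (-((1-δ)*Real.log n) - A) ≤ l := by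
          rw [← Real.exp_log hl]
          apply Real.exp_le_exp.2
          linarith
        have hA2 : A ≤ (δ/2)*Real.log n := by
          have h2Aδ : 2*A/δ ≤ Real.log n := le_trans (le_max_right _ _) hlog
          rw [div_le_iff₀ hδ0] at h2Aδ
          nlinarith
        have hmm := mul_le_mul hlexp hB1 (Real.exp_pos _).le hl.le
        rw [← Real.exp_add] at hmm
        calc (1:ℝ) = Real.exp 0 := Real.exp_zero.symm
          _ ≤ Real.exp (-((1-δ)*Real.log n) - A + (1-δ/2)*Real.log n) :=
            Real.exp_le_exp.2 (by nlinarith)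
          _ ≤ l * β (2*K2) := hmm
      have hmem := APG.spike_mem (β := β) hbpos hQ.le (2*K2)
      have h2 := APG.le_sup (n := n) hbpos hQ.le hl hmem
      rw [APG.spike_risk hbpos hQ.le hl (2*K2)] at h2
      have hquarter : Q/(4*β (2*K2)) ≤
          (l*β (2*K2)/(1+l*β (2*K2)))^2 * (Q/β (2*K2)) := by
        have h14 : (1:ℝ)/4 ≤ (l*β (2*K2)/(1+l*β (2*K2)))^2 := by
          rw [div_pow, div_le_div_iff₀ (by norm_num) (by positivity)]
          nlinarith
        calc Q/(4*β (2*K2)) = (1/4) * (Q/β (2*K2)) := by ring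
          _ ≤ _ := mul_le_mul_of_nonneg_right h14 (by positivity)
      have hS0 : (0:ℝ) ≤ 1/(n:ℝ) * ∑' m : ℕ, ((1 + l * β m) ^ 2)⁻¹ := by
        have h00 : (0:ℝ) ≤ ∑' m : ℕ, ((1 + l * β m) ^ 2)⁻¹ :=
          tsum_nonneg (fun m => by positivity)
        positivity
      have hP : Q/(4*β (2*K2)) ≤ ⨆ θ ∈ ellipsoid β Q, regRisk β n l θ := by
        refine le_trans ?_ h2
        calc Q/(4*β (2*K2)) ≤ (l*β (2*K2)/(1+l*β (2*K2)))^2 * (Q/β (2*K2)) := hquarter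
          _ ≤ 1/(n:ℝ) * (∑' m : ℕ, ((1 + l * β m) ^ 2)⁻¹)
              + (l*β (2*K2)/(1+l*β (2*K2)))^2 * (Q/β (2*K2)) := by linarith
      have hfinal := mul_le_mul_of_nonneg_left hP hc0
      calc 2*Real.sqrt 2/ω - ε ≤ 2*Real.sqrt 2/ω := by linarith
        _ ≤ (n:ℝ)/Real.sqrt (Real.log n) * (Q/(4*Real.exp ((K2:ℝ)^2*ω^2/2))) := hr
        _ = (n:ℝ)/Real.sqrt (Real.log n) * (Q/(4*β (2*K2))) := by rw [hBm]
        _ ≤ _ := hfinal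
  have hbddBelow : ∀ n : ℕ,
      BddBelow ((fun l : ℝ => ⨆ θ ∈ ellipsoid β Q, regRisk β n l θ) '' Set.Ioi 0) := by
    intro n
    refine ⟨0, ?_⟩
    rintro x ⟨l, hl, rfl⟩
    exact le_trans (APG.risk_nonneg hbpos (0 : ℕ → ℝ))
      (APG.le_sup (n := n) hbpos hQ.le (Set.mem_Ioi.1 hl) (APG.zero_mem (β := β) hQ.le))
  have hne : ∀ n : ℕ,
      ((fun l : ℝ => ⨆ θ ∈ ellipsoid β Q, regRisk β n l θ) '' Set.Ioi 0).Nonempty :=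
    fun n => ⟨_, Set.mem_image_of_mem _ (Set.mem_Ioi.2 one_pos)⟩
  have hInf_le : ∀ n : ℕ,
      sInf ((fun l : ℝ => ⨆ θ ∈ ellipsoid β Q, regRisk β n l θ) '' Set.Ioi 0)
        ≤ ⨆ θ ∈ ellipsoid β Q, regRisk β n (lam n) θ :=
    fun n => csInf_le (hbddBelow n) (Set.mem_image_of_mem _ (Set.mem_Ioi.2 (hlam n).1))
  rw [Metric.tendsto_atTop]
  intro ε hε
  have hev : ∀ᶠ n : ℕ in atTop, dist ((n : ℝ) / Real.sqrt (Real.log n) *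
      sInf ((fun l : ℝ => ⨆ θ ∈ ellipsoid β Q, regRisk β n l θ) '' Set.Ioi 0))
      (2 * Real.sqrt 2 / ω) < ε := by
    filter_upwards [hunif (ε/2) (by linarith),
      eventually_atTop.2 (Metric.tendsto_atTop.1 part1 (ε/2) (by linarith)),
      APG.sqrt_log_pos, eventually_ge_atTop 1] with n hu hp hsL hn1
    have hn0 : (0:ℝ) < (n:ℝ) := by exact_mod_cast hn1
    have hcpos : (0:ℝ) < (n:ℝ)/Real.sqrt (Real.log n) := by positivity
    rw [Real.dist_eq, abs_lt] at hp
    have hupper : (n:ℝ)/Real.sqrt (Real.log n) *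
        sInf ((fun l : ℝ => ⨆ θ ∈ ellipsoid β Q, regRisk β n l θ) '' Set.Ioi 0)
        ≤ 2 * Real.sqrt 2 / ω + ε/2 := by
      have := mul_le_mul_of_nonneg_left (hInf_le n) hcpos.le
      linarith
    have hIlb : (2 * Real.sqrt 2 / ω - ε/2) / ((n:ℝ)/Real.sqrt (Real.log n)) ≤
        sInf ((fun l : ℝ => ⨆ θ ∈ ellipsoid β Q, regRisk β n l θ) '' Set.Ioi 0) := by
      apply le_csInf (hne n)
      rintro x ⟨l, hl, rfl⟩
      rw [div_le_iff₀ hcpos]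
      have := hu l (Set.mem_Ioi.1 hl)
      dsimp only
      linarith
    have hlower : 2 * Real.sqrt 2 / ω - ε/2 ≤ (n:ℝ)/Real.sqrt (Real.log n) *
        sInf ((fun l : ℝ => ⨆ θ ∈ ellipsoid β Q, regRisk β n l θ) '' Set.Ioi 0) := by
      have := mul_le_mul_of_nonneg_left hIlb hcpos.le
      rwa [mul_div_cancel₀ _ hcpos.ne'] at this
    rw [Real.dist_eq, abs_lt]
    constructor <;> linarith
  rcases eventually_atTop.1 hev with ⟨N, hN⟩
  exact ⟨N, hN⟩
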